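/- Let q be a prime and s, λ complex numbers with Re(s) > 1 and Re(s − λ) > 1. Then ∑_{n ≥ 1, q | n} σ_λ(n) n^{−s} = ζ(s) ζ(s − λ) q^{−s} ( σ_λ(q) − q^{−(s−λ)} ), where the sum runs over positive multiples of q. -/

import Mathlib

open Complex Finset

open scoped LSeries.notation

namespace DivisorSumAux

/-- Sum of a term-function over the positive multiples of `q` equals the full L-series-style
tsum when the function vanishes off positive multiples of `q`. -/
lemma tsum_term_multiples (q : ℕ) (hq : q ≠ 0) (g : ℕ → ℂ)
    (hg : ∀ n, ¬ q ∣ n → g n = 0) (s : ℂ) :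
    ∑' n : ℕ, LSeries.term g s n
      = ∑' k : ℕ, g (q * (k + 1)) * ((q * (k + 1) : ℕ) : ℂ) ^ (-s) := by
  have hinj : Function.Injective (fun k : ℕ => q * (k + 1)) := by
    intro a b hab
    simpa [Nat.mul_left_cancel_iff (Nat.pos_of_ne_zero hq)] using hab
  have hsupp : Function.support (fun n => LSeries.term g s n)
      ⊆ Set.range (fun k : ℕ => q * (k + 1)) := by
    intro n hn
    simp only [Function.mem_support] at hn
    have hn0 : n ≠ 0 := by
      rintro rfl
      simp [LSeries.term] at hn
    have hdvd : q ∣ n := by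
      by_contra h
      rw [LSeries.term_of_ne_zero hn0, hg n h] at hn
      simp at hn
    obtain ⟨m, rfl⟩ := hdvd
    have hm : m ≠ 0 := by rintro rfl; simp at hn0
    exact ⟨m - 1, by
      simp only []
      congr 1
      omega⟩
  rw [← hinj.tsum_eq hsupp]
  refine tsum_congr fun k => ?_
  have hk : q * (k + 1) ≠ 0 := by positivity
  rw [LSeries.term_of_ne_zero hk, cpow_neg, div_eq_mul_inv]

lemma tsum_cpow_multiples (q : ℕ) (hq : q ≠ 0) (w : ℂ) (hw : 1 < w.re) :
    ∑' k : ℕ, ((q * (k + 1) : ℕ) : ℂ) ^ (-w) = (q : ℂ) ^ (-w) * riemannZeta w := by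
  have h1 : ∀ k : ℕ, ((q * (k + 1) : ℕ) : ℂ) ^ (-w)
      = (q : ℂ) ^ (-w) * (1 / ((k : ℂ) + 1) ^ w) := by
    intro k
    rw [Nat.cast_mul, natCast_mul_natCast_cpow]
    push_cast
    rw [cpow_neg, cpow_neg, one_div]
  simp_rw [h1]
  rw [tsum_mul_left, ← zeta_eq_tsum_one_div_nat_add_one_cpow hw]

lemma summable_aux (q : ℕ) (hq : q ≠ 0) {f : ℕ → ℂ} {s : ℂ}
    (hf : LSeriesSummable f s) :
    Summable (LSeries.term (fun n => if q ∣ n then f n else 0) s) := by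
  refine Summable.of_norm_bounded hf.norm fun n => ?_
  rcases eq_or_ne n 0 with rfl | hn
  · simp [LSeries.term]
  · rw [LSeries.term_of_ne_zero hn, LSeries.term_of_ne_zero hn]
    by_cases hd : q ∣ n
    · simp [hd]
    · simp only [hd, if_false, zero_div, norm_zero]
      positivity

end DivisorSumAux

open DivisorSumAux in
theorem divisor_sum_multiples_of_prime (q : ℕ) (hq : q.Prime) (s lam : ℂ)
    (hs : 1 < s.re) (hsl : 1 < (s - lam).re) :
    ∑' k : ℕ, (∑ d ∈ (q * (k + 1)).divisors, (d : ℂ) ^ lam) * ((q * (k + 1) : ℕ) : ℂ) ^ (-s)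
    = riemannZeta s * riemannZeta (s - lam) * (q : ℂ) ^ (-s)
      * ((∑ d ∈ q.divisors, (d : ℂ) ^ lam) - (q : ℂ) ^ (-(s - lam))) := by
  have hq0 : q ≠ 0 := hq.ne_zero
  -- the functions involved
  set sig : ℕ → ℂ := fun n => ∑ d ∈ n.divisors, (d : ℂ) ^ lam with hsig
  set p : ℕ → ℂ := fun n => (n : ℂ) ^ lam with hp
  set f : ℕ → ℂ := fun n => if q ∣ n then sig n else 0 with hf
  set u' : ℕ → ℂ := fun n => if q ∣ n then 0 else 1 with hu'
  set p' : ℕ → ℂ := fun n => if q ∣ n then 0 else p n with hp'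
  -- term of p at s equals term of 1 at s - lam
  have hterm_p : LSeries.term p s = LSeries.term 1 (s - lam) := by
    funext n
    rcases eq_or_ne n 0 with rfl | hn
    · simp [LSeries.term]
    · rw [LSeries.term_of_ne_zero hn, LSeries.term_of_ne_zero hn]
      have hn0 : (n : ℂ) ≠ 0 := Nat.cast_ne_zero.mpr hn
      rw [cpow_sub _ _ hn0]
      have h1 : (n : ℂ) ^ s ≠ 0 := by
        intro h; exact hn0 (cpow_eq_zero_iff _ _ |>.mp h).1
      have h2 : (n : ℂ) ^ lam ≠ 0 := by
        intro h; exact hn0 (cpow_eq_zero_iff _ _ |>.mp h).1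
      field_simp
      simp [hp]
  -- summabilities
  have h1sum : LSeriesSummable 1 s := LSeriesSummable_one_iff.mpr hs
  have hpsum : LSeriesSummable p s := by
    unfold LSeriesSummable
    rw [hterm_p]
    exact LSeriesSummable_one_iff.mpr hsl
  have hmu : Summable (LSeries.term (fun n => if q ∣ n then (1 : ℕ → ℂ) n else 0) s) :=
    summable_aux q hq0 h1sum
  have hmp : Summable (LSeries.term (fun n => if q ∣ n then p n else 0) s) :=
    summable_aux q hq0 hpsum
  have hu'sum : LSeriesSummable u' s := by
    have : u' = (1 : ℕ → ℂ) - fun n => if q ∣ n then (1 : ℕ → ℂ) n else 0 := by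
      funext n
      by_cases hd : q ∣ n <;> simp [hu', hd]
    rw [this]
    exact LSeriesSummable.sub h1sum hmu
  have hp'sum : LSeriesSummable p' s := by
    have : p' = p - fun n => if q ∣ n then p n else 0 := by
      funext n
      by_cases hd : q ∣ n <;> simp [hp', hd]
    rw [this]
    exact LSeriesSummable.sub hpsum hmp
  -- values of the basic L-series
  have hL1 : LSeries 1 s = riemannZeta s := LSeries_one_eq_riemannZeta hs
  have hLp : LSeries p s = riemannZeta (s - lam) := by
    rw [LSeries, hterm_p, ← LSeries]
    exact LSeries_one_eq_riemannZeta hsl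
  -- the value of the tsum of the indicator of multiples of q (constant 1 version)
  have hLmu : ∑' n : ℕ, LSeries.term (fun n => if q ∣ n then (1 : ℕ → ℂ) n else 0) s n
      = (q : ℂ) ^ (-s) * riemannZeta s := by
    rw [tsum_term_multiples q hq0 _ (fun n h => by simp [h]) s]
    have : ∀ k : ℕ, (if q ∣ q * (k + 1) then (1 : ℂ) else 0)
        * ((q * (k + 1) : ℕ) : ℂ) ^ (-s) = ((q * (k + 1) : ℕ) : ℂ) ^ (-s) := by
      intro k
      rw [if_pos (Dvd.intro _ rfl), one_mul]
    simp only [Pi.one_apply]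
    rw [tsum_congr this, tsum_cpow_multiples q hq0 s hs]
  -- the value of the tsum of the indicator of multiples of q (p version)
  have hLmp : ∑' n : ℕ, LSeries.term (fun n => if q ∣ n then p n else 0) s n
      = (q : ℂ) ^ (-(s - lam)) * riemannZeta (s - lam) := by
    rw [tsum_term_multiples q hq0 _ (fun n h => by simp [h]) s]
    have : ∀ k : ℕ, (if q ∣ q * (k + 1) then p (q * (k + 1)) else 0)
        * ((q * (k + 1) : ℕ) : ℂ) ^ (-s) = ((q * (k + 1) : ℕ) : ℂ) ^ (-(s - lam)) := by
      intro k
      rw [if_pos (Dvd.intro _ rfl)]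
      have hk0 : ((q * (k + 1) : ℕ) : ℂ) ≠ 0 := by
        exact_mod_cast Nat.cast_ne_zero.mpr (Nat.mul_ne_zero hq0 (Nat.succ_ne_zero k))
      rw [hp, ← cpow_add _ _ hk0]
      ring_nf
    rw [tsum_congr this, tsum_cpow_multiples q hq0 (s - lam) hsl]
  -- values of L-series of u' and p'
  have hLu' : LSeries u' s = riemannZeta s - (q : ℂ) ^ (-s) * riemannZeta s := by
    have heq : u' = (1 : ℕ → ℂ) - fun n => if q ∣ n then (1 : ℕ → ℂ) n else 0 := by
      funext n
      by_cases hd : q ∣ n <;> simp [hu', hd]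
    rw [heq, LSeries, LSeries.term_sub, ← hLmu, ← hL1, LSeries]
    exact Summable.tsum_sub h1sum hmu
  have hLp' : LSeries p' s
      = riemannZeta (s - lam) - (q : ℂ) ^ (-(s - lam)) * riemannZeta (s - lam) := by
    have heq : p' = p - fun n => if q ∣ n then p n else 0 := by
      funext n
      by_cases hd : q ∣ n <;> simp [hp', hd]
    rw [heq, LSeries, LSeries.term_sub, ← hLmp, ← hLp, LSeries]
    exact Summable.tsum_sub hpsum hmp
  -- f is a difference of two Dirichlet convolutions
  have hfeq : f = (1 : ℕ → ℂ) ⍟ p - u' ⍟ p' := by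
    funext n
    rcases eq_or_ne n 0 with rfl | hn
    · simp [hf, hsig, LSeries.convolution_map_zero]
    · have hconv1 : ((1 : ℕ → ℂ) ⍟ p) n = sig n := by
        rw [LSeries.convolution_def]
        simp only [Pi.one_apply, one_mul]
        rw [hsig]
        exact Nat.sum_divisorsAntidiagonal' (f := fun _ b => (b : ℂ) ^ lam)
      have hconv2 : (u' ⍟ p') n = if q ∣ n then 0 else sig n := by
        rw [LSeries.convolution_def]
        by_cases hd : q ∣ n
        · rw [if_pos hd]
          refine Finset.sum_eq_zero fun x hx => ?_
          rw [Nat.mem_divisorsAntidiagonal] at hx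
          have : q ∣ x.1 * x.2 := hx.1 ▸ hd
          rcases (Nat.Prime.dvd_mul hq).mp this with h | h
          · simp [hu', h]
          · simp [hp', h]
        · rw [if_neg hd]
          have h1 : ∀ x ∈ n.divisorsAntidiagonal, u' x.1 * p' x.2 = (x.2 : ℂ) ^ lam := by
            intro x hx
            rw [Nat.mem_divisorsAntidiagonal] at hx
            have hx1 : ¬ q ∣ x.1 := fun h => hd (h.trans (hx.1 ▸ Dvd.intro _ rfl))
            have hx2 : ¬ q ∣ x.2 := fun h => hd (h.trans (hx.1 ▸ Dvd.intro_left _ rfl))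
            simp [hu', hp', hp, hx1, hx2]
          refine Eq.trans (Finset.sum_congr rfl h1) ?_
          exact Nat.sum_divisorsAntidiagonal' (f := fun _ b => (b : ℂ) ^ lam)
      rw [Pi.sub_apply, hconv1, hconv2, hf]
      by_cases hd : q ∣ n <;> simp [hd]
  -- the left side equals the L-series of f
  have hLHS : ∑' k : ℕ, (∑ d ∈ (q * (k + 1)).divisors, (d : ℂ) ^ lam)
      * ((q * (k + 1) : ℕ) : ℂ) ^ (-s) = LSeries f s := by
    rw [LSeries, tsum_term_multiples q hq0 f (fun n h => by simp [hf, h]) s]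
    refine tsum_congr fun k => ?_
    have hdvd : q ∣ q * (k + 1) := ⟨k + 1, rfl⟩
    simp [hf, hdvd, hsig, hp]
  rw [hLHS, hfeq, LSeries_sub (h1sum.convolution hpsum) (hu'sum.convolution hp'sum),
    LSeries_convolution' h1sum hpsum, LSeries_convolution' hu'sum hp'sum,
    hL1, hLp, hLu', hLp']
  -- evaluate the divisor sum at the prime q
  have hdiv : (∑ d ∈ q.divisors, (d : ℂ) ^ lam) = 1 + (q : ℂ) ^ lam := by
    rw [hq.divisors, Finset.sum_pair hq.one_lt.ne, Nat.cast_one, one_cpow]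
  rw [hdiv]
  -- key power identity
  have hqc : (q : ℂ) ≠ 0 := Nat.cast_ne_zero.mpr hq0
  have hpow : (q : ℂ) ^ (-(s - lam)) = (q : ℂ) ^ (-s) * (q : ℂ) ^ lam := by
    rw [← cpow_add _ _ hqc]
    ring_nf
  rw [hpow]
  ring
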